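/- Let b = λ + iη with λ, η ∈ ℝ and λ > 0. Define for n ≥ 0 the polynomials ℛₙ(b;z) = ((2λ)ₙ/(λ)ₙ) · Σ_{k=0}^{n} [(−n)ₖ(b)ₖ/((2λ)ₖ k!)] (1−z)ᵏ, and let 𝒫ₙ(b;x) be the complementary Romanovski–Routh polynomials defined by 𝒫₀(b;x) = 1, 𝒫₁(b;x) = x − c₁, and 𝒫ₙ₊₁(b;x) = (x − cₙ₊₁)𝒫ₙ(b;x) − dₙ₊₁(x² + 1)𝒫ₙ₋₁(b;x) for n ≥ 1, where cₙ = η/(λ+n−1) and dₙ₊₁ = n(2λ+n−1)/(4(λ+n−1)(λ+n)). Then for every n ≥ 0 and every real x, ℛₙ(b; (x+i)/(x−i)) = (2ⁿ/(x−i)ⁿ) · 𝒫ₙ(b;x). -/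

import Mathlib

open Complex Finset

/-- Pochhammer symbol `(a)ₖ` over ℂ. -/
noncomputable def poch (a : ℂ) (k : ℕ) : ℂ := Polynomial.eval a (ascPochhammer ℂ k)

/-- The polynomials `ℛₙ(b;z)` (hypergeometric form), with `b = λ + iη`. -/
noncomputable def RR (lam eta : ℝ) (n : ℕ) (z : ℂ) : ℂ :=
  (poch (2 * lam) n / poch (lam : ℂ) n) *
    ∑ k ∈ Finset.range (n + 1),
      poch (-(n : ℂ)) k * poch ((lam : ℂ) + (eta : ℂ) * I) k /
          (poch (2 * lam) k * (Nat.factorial k : ℂ)) * (1 - z) ^ k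

/-- Complementary Romanovski–Routh polynomials `𝒫ₙ(b;x)` with `b = λ + iη`,
defined by the three-term recurrence, evaluated at complex `x`. -/
noncomputable def crr (lam eta : ℝ) : ℕ → ℂ → ℂ
  | 0, _ => 1
  | 1, x => x - ((eta / lam : ℝ) : ℂ)
  | n + 2, x =>
      (x - ((eta / (lam + n + 1) : ℝ) : ℂ)) * crr lam eta (n + 1) x -
        (((n + 1) * (2 * lam + n) / (4 * (lam + n) * (lam + n + 1)) : ℝ) : ℂ) *
          (x ^ 2 + 1) * crr lam eta n x

lemma poch_zero (a : ℂ) : poch a 0 = 1 := by simp [poch]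

lemma poch_succ (a : ℂ) (k : ℕ) : poch a (k + 1) = poch a k * (a + k) := by
  simp [poch, ascPochhammer_succ_right]

lemma poch_one (a : ℂ) : poch a 1 = a := by simp [poch]

lemma poch_succ_left (a : ℂ) (k : ℕ) : poch a (k + 1) = a * poch (a + 1) k := by
  simp [poch, ascPochhammer_succ_left, Polynomial.eval_comp]

lemma poch_ne_zero (a : ℂ) (ha : 0 < a.re) (k : ℕ) : poch a k ≠ 0 := by
  induction k with
  | zero => simp [poch_zero]
  | succ k ih =>
    rw [poch_succ]
    refine mul_ne_zero ih ?_
    intro h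
    have : (a + (k : ℂ)).re = 0 := by rw [h]; simp
    simp only [Complex.add_re, Complex.natCast_re] at this
    have : (0:ℝ) < a.re + k := by positivity
    linarith

lemma poch_neg_lt (n k : ℕ) (h : n < k) : poch (-(n : ℂ)) k = 0 := by
  induction k with
  | zero => omega
  | succ k ih =>
    rw [poch_succ]
    rcases Nat.lt_succ_iff_lt_or_eq.mp h with h' | h'
    · rw [ih h', zero_mul]
    · subst h'; simp

noncomputable def T (lam eta : ℝ) (n k : ℕ) : ℂ :=
  poch (-(n : ℂ)) k * poch ((lam : ℂ) + (eta : ℂ) * I) k /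
    (poch (2 * lam) k * (Nat.factorial k : ℂ))

lemma T_zero (lam eta : ℝ) (n : ℕ) : T lam eta n 0 = 1 := by
  simp [T, poch_zero]

lemma T_vanish (lam eta : ℝ) {n k : ℕ} (h : n < k) : T lam eta n k = 0 := by
  simp [T, poch_neg_lt n k h]

lemma natC_ne_zero (r : ℝ) (hr : 0 < r) : (r : ℂ) ≠ 0 := by
  simpa using ne_of_gt hr

set_option maxHeartbeats 1000000 in
lemma coeff (lam eta : ℝ) (hlam : 0 < lam) (n m : ℕ) :
    (2 * (lam : ℂ) + n + 1) * T lam eta (n + 2) (m + 1)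
      = 2 * ((lam : ℂ) + n + 1) * T lam eta (n + 1) (m + 1)
        - ((n : ℂ) + 1) * T lam eta n (m + 1)
        - (((lam : ℂ) + (eta : ℂ) * I) + n + 1) * T lam eta (n + 1) m
        + ((n : ℂ) + 1) * T lam eta n m := by
  have h2lam : (0:ℝ) < (2 * (lam:ℂ)).re := by
    simp [Complex.ofReal_re]; positivity
  have hfac : ∀ j : ℕ, ((Nat.factorial j : ℕ) : ℂ) ≠ 0 :=
    fun j => Nat.cast_ne_zero.mpr (Nat.factorial_ne_zero j)
  have hpoch2 : ∀ j : ℕ, poch (2 * (lam:ℂ)) j ≠ 0 := poch_ne_zero _ h2lam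
  have hcast2 : ((n+2 : ℕ) : ℂ) = (n:ℂ)+2 := by push_cast; ring
  have hcast1 : ((n+1 : ℕ) : ℂ) = (n:ℂ)+1 := by push_cast; ring
  have hlam0 : 2 * (lam:ℂ) ≠ 0 := mul_ne_zero two_ne_zero (natC_ne_zero lam hlam)
  cases m with
  | zero =>
    simp only [T, zero_add, poch_zero, poch_one, Nat.factorial_one, Nat.factorial_zero,
      Nat.cast_one, hcast1, hcast2]
    field_simp [hlam0, natC_ne_zero lam hlam]
    ring
  | succ j =>
    have e1 : poch (-((n:ℂ) + 2)) (j + 2) = ((n:ℂ)+1) * ((n:ℂ)+2) * poch (-(n:ℂ)) j := by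
      rw [poch_succ_left, show (-((n:ℂ)+2) + 1) = -((n:ℂ)+1) by ring, poch_succ_left,
        show (-((n:ℂ)+1) + 1) = -(n:ℂ) by ring]
      ring
    have e4 : poch (-((n:ℂ) + 1)) (j + 1) = -((n:ℂ)+1) * poch (-(n:ℂ)) j := by
      rw [poch_succ_left, show (-((n:ℂ)+1) + 1) = -(n:ℂ) by ring]
      try ring
    have e5 : poch (-(n:ℂ)) (j + 1) = ((j:ℂ) - n) * poch (-(n:ℂ)) j := by
      rw [poch_succ]; try ring
    have e2 : poch (-((n:ℂ) + 1)) (j + 2) = -((n:ℂ)+1) * ((j:ℂ) - n) * poch (-(n:ℂ)) j := by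
      rw [show j+2 = (j+1)+1 from rfl, poch_succ, e4]; push_cast; ring
    have e3 : poch (-(n:ℂ)) (j + 2) = ((j:ℂ) - n) * ((j:ℂ) + 1 - n) * poch (-(n:ℂ)) j := by
      rw [show j+2 = (j+1)+1 from rfl, poch_succ, e5]; push_cast; ring
    have eb : poch ((lam : ℂ) + (eta : ℂ) * I) (j + 2)
        = poch ((lam : ℂ) + (eta : ℂ) * I) (j+1) * (((lam : ℂ) + (eta : ℂ) * I) + ((j:ℂ)+1)) := by
      rw [show j+2 = (j+1)+1 from rfl, poch_succ]; push_cast; ring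
    have ec : poch (2 * (lam:ℂ)) (j + 2) = poch (2 * (lam:ℂ)) (j+1) * (2*(lam:ℂ) + ((j:ℂ)+1)) := by
      rw [show j+2 = (j+1)+1 from rfl, poch_succ]; push_cast; ring
    have ef : ((Nat.factorial (j+2) : ℕ) : ℂ) = ((j:ℂ)+2) * ((Nat.factorial (j+1) : ℕ) : ℂ) := by
      rw [Nat.factorial_succ]; push_cast; ring
    have hj1 : 2*(lam:ℂ) + ((j:ℂ)+1) ≠ 0 := by
      intro h
      have : (2*(lam:ℂ) + ((j:ℂ)+1)).re = 0 := by rw [h]; simp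
      simp only [Complex.add_re, Complex.natCast_re, Complex.mul_re, Complex.ofReal_re,
        Complex.ofReal_im, Complex.one_re] at this
      norm_num at this
      linarith
    have hj2 : ((j:ℂ) + 2) ≠ 0 := by
      intro h
      have : ((j:ℂ)+2).re = 0 := by rw [h]; simp
      simp only [Complex.add_re, Complex.natCast_re] at this
      norm_num at this
      linarith
    simp only [T, hcast1, hcast2, show j+1+1 = j+2 from rfl]
    rw [e1, e2, e3, e4, e5, eb, ec, ef]
    set Pj := poch (-(n:ℂ)) j with hPj
    set B := poch ((lam : ℂ) + (eta : ℂ) * I) (j+1) with hB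
    set C := poch (2 * (lam:ℂ)) (j+1) with hC
    set F := ((Nat.factorial (j+1) : ℕ) : ℂ) with hF
    have hCne : C ≠ 0 := hpoch2 _
    have hFne : F ≠ 0 := hfac _
    have hD1 : C * F ≠ 0 := mul_ne_zero hCne hFne
    have hD2 : C * (2 * (lam:ℂ) + ((j:ℂ) + 1)) * (((j:ℂ) + 2) * F) ≠ 0 :=
      mul_ne_zero (mul_ne_zero hCne hj1) (mul_ne_zero hj2 hFne)
    have r1 : ∀ X : ℂ, X / (C * F)
        = (X * ((2 * (lam:ℂ) + ((j:ℂ) + 1)) * ((j:ℂ) + 2)))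
          / (C * (2 * (lam:ℂ) + ((j:ℂ) + 1)) * (((j:ℂ) + 2) * F)) := by
      intro X
      rw [div_eq_div_iff hD1 hD2]
      ring
    simp only [r1, ← mul_div_assoc]
    rw [div_sub_div_same, div_sub_div_same, ← add_div, div_eq_div_iff hD2 hD2]
    ring

lemma key (lam eta : ℝ) (hlam : 0 < lam) (n : ℕ) (u : ℂ) :
    (2 * (lam : ℂ) + n + 1) * ∑ k ∈ Finset.range (n + 3), T lam eta (n + 2) k * u ^ k
      = (2 * ((lam : ℂ) + n + 1) - (((lam : ℂ) + (eta : ℂ) * I) + n + 1) * u) *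
          ∑ k ∈ Finset.range (n + 2), T lam eta (n + 1) k * u ^ k
        - ((n : ℂ) + 1) * (1 - u) * ∑ k ∈ Finset.range (n + 1), T lam eta n k * u ^ k := by
  have ext : ∀ (a N : ℕ), a + 1 ≤ N →
      ∑ k ∈ Finset.range N, T lam eta a k * u ^ k
        = ∑ k ∈ Finset.range (a + 1), T lam eta a k * u ^ k := by
    intro a N hN
    rw [← Finset.sum_subset (Finset.range_subset_range.mpr hN)]
    intro k hk hk'
    rw [T_vanish lam eta (by simp only [Finset.mem_range, not_lt] at hk'; omega), zero_mul]
  rw [← ext (n+2) (n+4) (by omega), ← ext (n+1) (n+4) (by omega), ← ext n (n+4) (by omega)]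
  have hc3 : (-((((lam : ℂ) + (eta : ℂ) * I) + n + 1)) * T lam eta (n+1) (n+3)
      + ((n:ℂ) + 1) * T lam eta n (n+3)) * u ^ (n+3+1) = 0 := by
    rw [T_vanish lam eta (show n < n+3 by omega), T_vanish lam eta (show n+1 < n+3 by omega)]
    ring
  have hshift : ∑ k ∈ Finset.range (n + 4),
        (if k = 0 then 0 else
          (-((((lam : ℂ) + (eta : ℂ) * I) + n + 1)) * T lam eta (n+1) (k-1)
            + ((n:ℂ) + 1) * T lam eta n (k-1)) * u ^ k)
      = ∑ k ∈ Finset.range (n + 4),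
          (-((((lam : ℂ) + (eta : ℂ) * I) + n + 1)) * T lam eta (n+1) k
            + ((n:ℂ) + 1) * T lam eta n k) * u ^ (k+1) := by
    rw [Finset.sum_range_succ']
    simp only [if_neg (Nat.succ_ne_zero _), Nat.add_sub_cancel, if_pos rfl, add_zero]
    rw [Finset.sum_range_succ
      (fun k => (-((((lam : ℂ) + (eta : ℂ) * I) + n + 1)) * T lam eta (n+1) k
            + ((n:ℂ) + 1) * T lam eta n k) * u ^ (k+1)) (n+3)]
    rw [hc3, add_zero]
    simp
  calc (2 * (lam : ℂ) + n + 1) * ∑ k ∈ Finset.range (n + 4), T lam eta (n + 2) k * u ^ k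
      = ∑ k ∈ Finset.range (n + 4), ((2 * (lam : ℂ) + n + 1) * T lam eta (n + 2) k) * u ^ k := by
        rw [Finset.mul_sum]
        exact Finset.sum_congr rfl fun k _ => by ring
    _ = ∑ k ∈ Finset.range (n + 4),
          ((2 * ((lam : ℂ) + n + 1) * T lam eta (n+1) k - ((n:ℂ)+1) * T lam eta n k) * u ^ k
            + (if k = 0 then 0 else
              (-((((lam : ℂ) + (eta : ℂ) * I) + n + 1)) * T lam eta (n+1) (k-1)
                + ((n:ℂ) + 1) * T lam eta n (k-1)) * u ^ k)) := by
        refine Finset.sum_congr rfl fun k _ => ?_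
        cases k with
        | zero => simp only [T_zero]; norm_num; ring
        | succ j =>
          rw [if_neg (Nat.succ_ne_zero j)]
          simp only [Nat.add_sub_cancel]
          linear_combination u ^ (j+1) * coeff lam eta hlam n j
    _ = (∑ k ∈ Finset.range (n + 4),
          (2 * ((lam : ℂ) + n + 1) * T lam eta (n+1) k - ((n:ℂ)+1) * T lam eta n k) * u ^ k)
        + ∑ k ∈ Finset.range (n + 4),
            (-((((lam : ℂ) + (eta : ℂ) * I) + n + 1)) * T lam eta (n+1) k
              + ((n:ℂ) + 1) * T lam eta n k) * u ^ (k+1) := by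
        rw [Finset.sum_add_distrib, hshift]
    _ = (2 * ((lam : ℂ) + n + 1) - (((lam : ℂ) + (eta : ℂ) * I) + n + 1) * u) *
          ∑ k ∈ Finset.range (n + 4), T lam eta (n + 1) k * u ^ k
        - ((n : ℂ) + 1) * (1 - u) * ∑ k ∈ Finset.range (n + 4), T lam eta n k * u ^ k := by
        rw [Finset.mul_sum, Finset.mul_sum, ← Finset.sum_sub_distrib, ← Finset.sum_add_distrib]
        exact Finset.sum_congr rfl fun k _ => by ring

lemma RR_eq (lam eta : ℝ) (n : ℕ) (z : ℂ) :
    RR lam eta n z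
      = (poch (2 * lam) n / poch (lam : ℂ) n) *
          ∑ k ∈ Finset.range (n + 1), T lam eta n k * (1 - z) ^ k := rfl

lemma hpos_ne (s : ℂ) (hs : 0 < s.re) : s ≠ 0 := fun h => by simp [h] at hs

theorem stmt6 (lam eta : ℝ) (hlam : 0 < lam) (n : ℕ) (x : ℝ) :
    RR lam eta n (((x : ℂ) + I) / ((x : ℂ) - I)) =
      (2 ^ n / ((x : ℂ) - I) ^ n) * crr lam eta n x := by
  have hx : ((x : ℂ) - I) ≠ 0 := by
    intro h
    have := congrArg Complex.im h
    simp at this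
  induction n using Nat.twoStepInduction with
  | zero =>
    simp [RR_eq, crr, T, poch_zero]
  | one =>
    have hl : (lam : ℂ) ≠ 0 := by
      simpa using ne_of_gt hlam
    rw [RR_eq]
    simp only [Finset.sum_range_succ, Finset.sum_range_zero, T, poch_zero, poch_one,
      Nat.factorial_one, Nat.factorial_zero, Nat.cast_one, Nat.cast_zero, crr]
    push_cast
    field_simp
    ring_nf
    linear_combination (2*(eta:ℂ)) * Complex.I_sq
  | more n ih0 ih1 =>
    -- notation
    have hk := key lam eta hlam n (1 - ((x : ℂ) + I) / ((x : ℂ) - I))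
    -- clear denominators in the induction hypotheses
    have hpl : poch (lam : ℂ) (n+1) ≠ 0 := poch_ne_zero _ (by simpa using hlam) _
    have hpl0 : poch (lam : ℂ) n ≠ 0 := poch_ne_zero _ (by simpa using hlam) _
    have hX1 : ((x : ℂ) - I) ^ (n+1) ≠ 0 := pow_ne_zero _ hx
    have hX0 : ((x : ℂ) - I) ^ n ≠ 0 := pow_ne_zero _ hx
    rw [RR_eq] at ih0 ih1
    rw [div_mul_eq_mul_div, div_mul_eq_mul_div, div_eq_div_iff hpl hX1] at ih1
    rw [div_mul_eq_mul_div, div_mul_eq_mul_div, div_eq_div_iff hpl0 hX0] at ih0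
    simp only [show n+1+1 = n+2 from rfl] at ih1
    -- poch expansions
    have hq1 : poch (2 * (lam:ℂ)) (n+1) = poch (2 * (lam:ℂ)) n * (2 * (lam:ℂ) + n) :=
      poch_succ _ n
    have hq2 : poch (2 * (lam:ℂ)) (n+2)
        = poch (2 * (lam:ℂ)) n * ((2 * (lam:ℂ) + n) * (2 * (lam:ℂ) + n + 1)) := by
      rw [show n+2 = (n+1)+1 from rfl, poch_succ, hq1]
      push_cast; ring
    have hp1 : poch ((lam:ℂ)) (n+1) = poch ((lam:ℂ)) n * ((lam:ℂ) + n) := poch_succ _ n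
    have hp2 : poch ((lam:ℂ)) (n+2)
        = poch ((lam:ℂ)) n * (((lam:ℂ) + n) * ((lam:ℂ) + n + 1)) := by
      rw [show n+2 = (n+1)+1 from rfl, poch_succ, hp1]
      push_cast; ring
    rw [hq1, hp1] at ih1
    -- the zeta relation
    have hzeta : (1 - ((x : ℂ) + I) / ((x : ℂ) - I)) * ((x : ℂ) - I) = -2 * I := by
      field_simp
      ring
    have hr1 : (2 * ((lam:ℂ) + n + 1)
          - (((lam:ℂ) + (eta:ℂ) * I) + n + 1) * (1 - ((x : ℂ) + I) / ((x : ℂ) - I)))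
            * ((x : ℂ) - I)
        = 2 * ((x:ℂ) * ((lam:ℂ) + n + 1) - eta) := by
      linear_combination (-(((lam:ℂ) + (eta:ℂ) * I) + n + 1)) * hzeta + (2 * (eta:ℂ)) * Complex.I_sq
    have hr2 : (1 - (1 - ((x : ℂ) + I) / ((x : ℂ) - I))) * ((x : ℂ) - I) ^ 2
        = (x:ℂ) ^ 2 + 1 := by
      linear_combination (-((x:ℂ) - I)) * hzeta - Complex.I_sq
    -- cleared form of the recurrence
    have K : (2 * (lam:ℂ) + n + 1)
          * (∑ k ∈ Finset.range (n + 3), T lam eta (n + 2) k * (1 - ((x : ℂ) + I) / ((x : ℂ) - I)) ^ k)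
          * ((x : ℂ) - I) ^ 2
        = 2 * ((x:ℂ) * ((lam:ℂ) + n + 1) - eta)
            * (∑ k ∈ Finset.range (n + 2), T lam eta (n + 1) k * (1 - ((x : ℂ) + I) / ((x : ℂ) - I)) ^ k)
            * ((x : ℂ) - I)
          - ((n:ℂ) + 1) * ((x:ℂ) ^ 2 + 1)
            * ∑ k ∈ Finset.range (n + 1), T lam eta n k * (1 - ((x : ℂ) + I) / ((x : ℂ) - I)) ^ k := by
      linear_combination (((x : ℂ) - I) ^ 2) * hk
        + ((∑ k ∈ Finset.range (n + 2), T lam eta (n + 1) k * (1 - ((x : ℂ) + I) / ((x : ℂ) - I)) ^ k)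
            * ((x : ℂ) - I)) * hr1
        - (((n:ℂ) + 1)
            * ∑ k ∈ Finset.range (n + 1), T lam eta n k * (1 - ((x : ℂ) + I) / ((x : ℂ) - I)) ^ k) * hr2
    -- now the goal
    rw [RR_eq]
    simp only [show n+2+1 = n+3 from rfl, crr]
    push_cast
    rw [hq2, hp2]
    have hane : ((lam:ℂ) + n) ≠ 0 := hpos_ne _ (by
      simp only [Complex.add_re, Complex.natCast_re, Complex.ofReal_re]; positivity)
    have hbne : ((lam:ℂ) + n + 1) ≠ 0 := hpos_ne _ (by
      simp only [Complex.add_re, Complex.natCast_re, Complex.ofReal_re, Complex.one_re]; positivity)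
    set S2 := ∑ k ∈ Finset.range (n + 3),
        T lam eta (n + 2) k * (1 - ((x : ℂ) + I) / ((x : ℂ) - I)) ^ k with hS2
    set S1 := ∑ k ∈ Finset.range (n + 2),
        T lam eta (n + 1) k * (1 - ((x : ℂ) + I) / ((x : ℂ) - I)) ^ k with hS1
    set S0 := ∑ k ∈ Finset.range (n + 1),
        T lam eta n k * (1 - ((x : ℂ) + I) / ((x : ℂ) - I)) ^ k with hS0
    set C1 := crr lam eta (n + 1) (x:ℂ) with hC1
    set C0 := crr lam eta n (x:ℂ) with hC0
    have hX2 : ((x : ℂ) - I) ^ (n+2) ≠ 0 := pow_ne_zero _ hx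
    field_simp
    linear_combination
      (4 * poch (2*(lam:ℂ)) n * (2*(lam:ℂ)+n) * ((x:ℂ)-I)^n) * K
      + (8 * ((x:ℂ)*((lam:ℂ)+n+1) - (eta:ℂ))) * ih1
      - (4 * (2*(lam:ℂ)+n) * ((n:ℂ)+1) * ((x:ℂ)^2+1)) * ih0
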